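/- Let p, q be coprime integers with q ≥ 2, and let J : ℤ → ℤ[t,t⁻¹] satisfy J(−m) = −J(m) for all m and J(m) ≠ 0 for all m ≥ 1. Suppose there are rational numbers a*₀, a*₁, b*₀, b*₁, d*₀, d*₁ with b*₀ ≥ 0 and b*₁ ≥ 0, and an integer N, such that for all n ≥ N one has deg₋ J(n) = 4(a*_ε n² + b*_ε n + d*_ε), where ε ∈ {0,1} is the parity of n. If p/q ∉ {4a*₀, 4a*₁}, then there are rational numbers A*₀, A*₁, B*₀, B*₁, D*₀, D*₁ with {A*₀, A*₁} ⊆ {q²a*₀, q²a*₁, pq/4}, B*₀ ≥ 0, B*₁ ≥ 0, and an integer N′ such that for all n ≥ N′ one has JC(n) ≠ 0 and deg₋ JC(n) = 4(A*_ε n² + B*_ε n + D*_ε), where ε is the parity of n. (The lowest-degree half of Theorem 3.6, obtained from Proposition 3.4 applied to the mirror image, expressed for the cabling sum.) -/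

import Mathlib

open LaurentPolynomial

/-- `degM f` is the smallest exponent of `t` occurring in the Laurent polynomial `f`
(declared to be `0` for `f = 0`). -/
noncomputable def degM (f : LaurentPolynomial ℤ) : ℤ := WithTop.untopD 0 f.coeff.support.min

/-- The `(p,q)`-cabling sum `JC(n) = Σ_j t^{pq(n²−1) − p·j·(qj+2)} · J(qj+1)`,
the sum over integers `j` with `|j| ≤ n−1` and `j ≡ n−1 (mod 2)`. -/
noncomputable def cablingSum (J : ℤ → LaurentPolynomial ℤ) (p q : ℤ) (n : ℕ) :
    LaurentPolynomial ℤ :=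
  ∑ j ∈ (Finset.Icc (1 - (n : ℤ)) ((n : ℤ) - 1)).filter
      (fun j => j % 2 = ((n : ℤ) - 1) % 2),
    T (p * q * ((n : ℤ) ^ 2 - 1) - p * j * (q * j + 2)) * J (q * j + 1)

noncomputable def cf (f : LaurentPolynomial ℤ) (d : ℤ) : ℤ := f.coeff d

lemma cf_T_mul (e : ℤ) (f : LaurentPolynomial ℤ) (y : ℤ) : cf (T e * f) y = cf f (y - e) := by
  have : (T e * f).coeff y = (1:ℤ) * f.coeff (-e + y) :=
    AddMonoidAlgebra.coeff_single_mul_apply f (1:ℤ) e y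
  simpa [cf, neg_add_eq_sub] using this

lemma mem_supp (f : LaurentPolynomial ℤ) (d : ℤ) : d ∈ f.coeff.support ↔ cf f d ≠ 0 :=
  Finsupp.mem_support_iff

lemma degM_mem (f : LaurentPolynomial ℤ) (hf : f ≠ 0) : cf f (degM f) ≠ 0 := by
  have h : f.coeff.support.Nonempty := Finsupp.support_nonempty_iff.2 (mt AddMonoidAlgebra.coeff_eq_zero.1 hf)
  have h2 : f.coeff.support.min = ((f.coeff.support.min' h : ℤ) : WithTop ℤ) := (Finset.coe_min' h).symm
  have : degM f = f.coeff.support.min' h := by rw [degM, h2]; rfl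
  rw [this, ← mem_supp]; exact Finset.min'_mem _ h

lemma cf_eq_zero_of_lt {f : LaurentPolynomial ℤ} {d : ℤ} (h : d < degM f) : cf f d = 0 := by
  by_cases hf : f = 0
  · simp [hf, cf]
  by_contra hc
  have hmem : d ∈ f.coeff.support := (mem_supp f d).2 hc
  have h1 : f.coeff.support.Nonempty := ⟨d, hmem⟩
  have h2 : degM f = f.coeff.support.min' h1 := by rw [degM, (Finset.coe_min' h1).symm]; rfl
  exact absurd (Finset.min'_le _ _ hmem) (by rw [← h2]; omega)

lemma degM_le_of_cf_ne {f : LaurentPolynomial ℤ} {d : ℤ} (h : cf f d ≠ 0) : degM f ≤ d := by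
  by_contra hc; exact h (cf_eq_zero_of_lt (by omega))

lemma degM_eq_of {f : LaurentPolynomial ℤ} {D : ℤ} (hD : cf f D ≠ 0)
    (h : ∀ d, d < D → cf f d = 0) : degM f = D := by
  have hf : f ≠ 0 := fun h0 => hD (by simp [h0, cf])
  have h1 : f.coeff.support.Nonempty := Finsupp.support_nonempty_iff.2 (mt AddMonoidAlgebra.coeff_eq_zero.1 hf)
  have h2 : degM f = f.coeff.support.min' h1 := by rw [degM, (Finset.coe_min' h1).symm]; rfl
  have hle : degM f ≤ D := h2 ▸ Finset.min'_le _ _ ((mem_supp f D).2 hD)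
  rcases lt_or_eq_of_le hle with hlt | he
  · exact absurd (h _ hlt) (degM_mem f hf)
  · exact he

lemma cf_neg (f : LaurentPolynomial ℤ) (d : ℤ) : cf (-f) d = - cf f d := by
  simp [cf]

lemma degM_neg (f : LaurentPolynomial ℤ) : degM (-f) = degM f := by
  by_cases hf : f = 0
  · simp [hf]
  · refine degM_eq_of ?_ (fun d hd => ?_)
    · rw [cf_neg]; simpa using degM_mem f hf
    · rw [cf_neg, cf_eq_zero_of_lt hd, neg_zero]

lemma cf_sum {α : Type} (s : Finset α) (F : α → LaurentPolynomial ℤ) (d : ℤ) :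
    cf (∑ j ∈ s, F j) d = ∑ j ∈ s, cf (F j) d := by
  simp only [cf]
  rw [AddMonoidAlgebra.coeff_sum]
  exact Finsupp.finset_sum_apply s (fun j => (F j).coeff) d

lemma T_mul_ne_zero {f : LaurentPolynomial ℤ} (e : ℤ) (hf : f ≠ 0) : T e * f ≠ 0 := by
  intro h0
  have : T (-e) * (T e * f) = f := by
    rw [← mul_assoc, ← T_add]; simp
  rw [h0, mul_zero] at this; exact hf this.symm

lemma degM_T_mul {f : LaurentPolynomial ℤ} (e : ℤ) (hf : f ≠ 0) :
    degM (T e * f) = e + degM f := by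
  refine degM_eq_of ?_ (fun d hd => ?_)
  · rw [cf_T_mul]; simpa using degM_mem f hf
  · rw [cf_T_mul]; exact cf_eq_zero_of_lt (by omega)

lemma lin_big (c e M : ℚ) (hc : 0 < c) : ∃ R : ℤ, ∀ x : ℤ, R ≤ x → M < c * x + e := by
  refine ⟨⌈(M - e)/c⌉ + 1, fun x hx => ?_⟩
  have h1 : ((M - e)/c : ℚ) ≤ ⌈(M - e)/c⌉ := Int.le_ceil _
  have h2 : ((⌈(M - e)/c⌉ : ℤ) : ℚ) + 1 ≤ (x : ℚ) := by exact_mod_cast hx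
  have h3 : (M - e)/c + 1 ≤ (x:ℚ) := by linarith
  have h4 : (M - e)/c * c = M - e := div_mul_cancel₀ _ (ne_of_gt hc)
  nlinarith

lemma quad_big (L c e M : ℚ) (hL : 0 < L) :
    ∃ R : ℤ, 1 ≤ R ∧ ∀ x : ℤ, R ≤ x → M < L * x^2 + c * x + e := by
  obtain ⟨R₀, hR₀⟩ := lin_big L (c - 1) 0 hL
  refine ⟨max R₀ (max 1 ⌈M - e + 1⌉), le_max_of_le_right (le_max_left _ _), fun x hx => ?_⟩
  have h1 : (0:ℚ) < L * x + (c - 1) := hR₀ x (le_trans (le_max_left _ _) hx)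
  have h2 : (1:ℚ) ≤ (x:ℚ) := by exact_mod_cast le_trans (le_max_of_le_right (le_max_left _ _)) hx
  have h3 : (M - e + 1 : ℚ) ≤ x := by
    have : (⌈M - e + 1⌉ : ℤ) ≤ x := le_trans (le_max_of_le_right (le_max_right _ _)) hx
    calc (M - e + 1 : ℚ) ≤ ⌈M - e + 1⌉ := Int.le_ceil _
    _ ≤ x := by exact_mod_cast this
  nlinarith

lemma quad_lb (L c e : ℚ) (hL : 0 < L) : ∃ M : ℚ, ∀ x : ℤ, M ≤ L * x^2 + c * x + e := by
  refine ⟨e - c^2/(4*L), fun x => ?_⟩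
  have h4 : (0:ℚ) < 4 * L := by linarith
  have h5 : c^2/(4*L) * (4*L) = c^2 := div_mul_cancel₀ _ (ne_of_gt h4)
  nlinarith [sq_nonneg (2*L*(x:ℚ) + c)]
lemma cabling_split (J : ℤ → LaurentPolynomial ℤ) (p q : ℤ) (n : ℕ) (r : ℤ)
    (hpar : ((n:ℤ) - 1) % 2 = r) :
    cablingSum J p q n = T (p*q*((n:ℤ)^2 - 1)) *
      ∑ j ∈ (Finset.Icc (1 - (n:ℤ)) ((n:ℤ) - 1)).filter (fun j => j % 2 = r),
        T (-(p*j*(q*j+2))) * J (q*j+1) := by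
  rw [cablingSum, Finset.mul_sum, hpar]
  refine Finset.sum_congr rfl (fun j _ => ?_)
  rw [← mul_assoc, ← T_add]
  ring_nf

set_option maxHeartbeats 2000000 in
lemma classLemma (p q : ℤ) (hq : 2 ≤ q)
    (J : ℤ → LaurentPolynomial ℤ)
    (hJne' : ∀ j : ℤ, J (q*j+1) ≠ 0)
    (a b d : ℚ) (hb : 0 ≤ b) (r : ℤ)
    (j₁ : ℤ) (hj₁ : 1 ≤ j₁)
    (hdegP : ∀ j : ℤ, j₁ ≤ j → j % 2 = r →
      (degM (J (q*j+1)) : ℚ) = 4*(a*((q:ℚ)*j+1)^2 + b*((q:ℚ)*j+1) + d))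
    (hdegN : ∀ j : ℤ, j ≤ -j₁ → j % 2 = r →
      (degM (J (q*j+1)) : ℚ) = 4*(a*((q:ℚ)*j+1)^2 - b*((q:ℚ)*j+1) + d))
    (hL : (4*a*q - p : ℚ) ≠ 0) :
    ∃ A B D : ℚ, ∃ N' : ℤ,
      (A = (q:ℚ)^2 * a ∨ A = (p:ℚ)*(q:ℚ)/4) ∧ 0 ≤ B ∧
      ∀ n : ℕ, N' ≤ (n:ℤ) → ((n:ℤ) - 1) % 2 = r →
        cablingSum J p q n ≠ 0 ∧
        (degM (cablingSum J p q n) : ℚ) = 4*(A*(n:ℚ)^2 + B*(n:ℚ) + D) := by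
  -- basic data
  set L' : ℚ := 4*a*q^2 - p*q with hL'def
  set cP : ℚ := 8*a*q - 2*p + 4*b*q with hcPdef
  set cM : ℚ := 8*a*q - 2*p - 4*b*q with hcMdef
  set eP : ℚ := 4*a + 4*b + 4*d with hePdef
  set eM : ℚ := 4*a - 4*b + 4*d with heMdef
  have hq0 : (0:ℚ) < (q:ℚ) := by exact_mod_cast (by omega : (0:ℤ) < q)
  have hLq : L' = (q:ℚ) * (4*a*q - p) := by ring
  set w : ℤ → ℤ := fun j => -(p*j*(q*j+2)) with hwdef
  set t : ℤ → LaurentPolynomial ℤ := fun j => T (w j) * J (q*j+1) with htdef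
  set ψ : ℤ → ℤ := fun j => w j + degM (J (q*j+1)) with hψdef
  have ht0 : ∀ j, t j ≠ 0 := fun j => T_mul_ne_zero _ (hJne' j)
  have hdegt : ∀ j, degM (t j) = ψ j := fun j => degM_T_mul _ (hJne' j)
  have hcfD : ∀ j, cf (t j) (ψ j) ≠ 0 := fun j => (hdegt j) ▸ degM_mem _ (ht0 j)
  have hcflt : ∀ j d, d < ψ j → cf (t j) d = 0 := fun j d hd =>
    cf_eq_zero_of_lt (by rw [hdegt]; exact hd)
  have hψP : ∀ j : ℤ, j₁ ≤ j → j % 2 = r → (ψ j : ℚ) = L'*(j:ℚ)^2 + cP*(j:ℚ) + eP := by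
    intro j hj hp
    have := hdegP j hj hp
    simp only [hψdef, hwdef]
    push_cast
    rw [this]; ring
  have hψM : ∀ j : ℤ, j ≤ -j₁ → j % 2 = r → (ψ j : ℚ) = L'*(j:ℚ)^2 + cM*(j:ℚ) + eM := by
    intro j hj hp
    have := hdegN j hj hp
    simp only [hψdef, hwdef]
    push_cast
    rw [this]; ring
  -- small-j lower bound
  set Ssmall : Finset ℤ := insert 0 (Finset.Icc (-j₁) j₁) with hSdef
  have hSne : Ssmall.Nonempty := ⟨0, Finset.mem_insert_self _ _⟩
  set Msmall : ℚ := Ssmall.inf' hSne (fun j => (ψ j : ℚ)) with hMsdef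
  have hMsmall : ∀ j : ℤ, -j₁ ≤ j → j ≤ j₁ → Msmall ≤ (ψ j : ℚ) := by
    intro j h1 h2
    exact Finset.inf'_le _ (by simp [hSdef, Finset.mem_Icc]; omega)
  -- final reduction lemma
  have hfinal : ∀ (n : ℕ) (Dn : ℤ), ((n:ℤ) - 1) % 2 = r →
      (degM (∑ j ∈ (Finset.Icc (1 - (n:ℤ)) ((n:ℤ) - 1)).filter (fun j => j % 2 = r), t j) = Dn) →
      ((∑ j ∈ (Finset.Icc (1 - (n:ℤ)) ((n:ℤ) - 1)).filter (fun j => j % 2 = r), t j) ≠ 0) →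
      cablingSum J p q n ≠ 0 ∧
      (degM (cablingSum J p q n) : ℚ) = (p:ℚ)*q*((n:ℚ)^2 - 1) + (Dn : ℚ) := by
    intro n Dn hpar hdeg hne
    rw [cabling_split J p q n r hpar]
    constructor
    · exact T_mul_ne_zero _ hne
    · rw [degM_T_mul _ hne, hdeg]
      push_cast
      ring
  have ne_zero_of_cf : ∀ {f : LaurentPolynomial ℤ} {dd : ℤ}, cf f dd ≠ 0 → f ≠ 0 :=
    fun {f} {dd} h h0 => h (by simp [h0, cf])
  rcases lt_or_gt_of_ne hL with hneg | hpos
  · -- L' < 0 case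
    have hLneg : L' < 0 := by rw [hLq]; exact mul_neg_of_pos_of_neg hq0 hneg
    have hq2 : (2:ℚ) ≤ (q:ℚ) := by exact_mod_cast hq
    obtain ⟨R₁, hR₁⟩ := lin_big (-L') (-L'*(j₁-1) - cP) 0 (by linarith)
    obtain ⟨R₂, hR₂⟩ := lin_big (-(cP+cM)) ((cP+cM) + (eM-eP)) 0
      (by simp only [hcPdef, hcMdef]; nlinarith)
    obtain ⟨R₃, hR₃⟩ := lin_big (-L') (L' + cM) 0 (by linarith)
    obtain ⟨R₄, -, hR₄⟩ := quad_big (-L') (-cP) (-eP) (-Msmall) (by linarith)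
    refine ⟨(q:ℚ)^2*a, ((q:ℚ)-1)*((p:ℚ)-4*a*(q:ℚ))/2 + b*(q:ℚ),
      ((p:ℚ)-(p:ℚ)*(q:ℚ))/2 + a*((q:ℚ)-1)^2 - b*((q:ℚ)-1) + d,
      R₁ ⊔ R₂ ⊔ R₃ ⊔ (R₄+1) ⊔ (j₁+2), Or.inl rfl, by nlinarith, ?_⟩
    intro n hn hpar
    simp only [sup_le_iff] at hn
    obtain ⟨⟨⟨⟨hn1, hn2⟩, hn3⟩, hn4⟩, hn5⟩ := hn
    set m : ℤ := (n : ℤ) with hmdef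
    have hmc : ((m:ℚ)) = (n:ℚ) := by norm_cast
    have hkey : ∀ j ∈ (Finset.Icc (1 - m) (m-1)).filter (fun j => j % 2 = r),
        j ≠ m - 1 → ψ (m-1) < ψ j := by
      intro j hj hne
      rw [Finset.mem_filter, Finset.mem_Icc] at hj
      obtain ⟨⟨h1, h2⟩, h3⟩ := hj
      have goalQ : (ψ (m-1) : ℚ) < (ψ j : ℚ) := by
        rw [hψP (m-1) (by omega) (by omega)]
        have hmq : ((m-1 : ℤ) : ℚ) = (m:ℚ) - 1 := by push_cast; ring
        rw [hmq]
        by_cases hc1 : j₁ ≤ j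
        · have hj3 : j ≤ m - 3 := by omega
          rw [hψP j hc1 h3]
          have hca : (0:ℚ) < -L'*(m:ℚ) + (-L'*((j₁:ℚ)-1) - cP) := by
            have := hR₁ m (by omega)
            push_cast at this ⊢; linarith
          have hjq : ((j₁:ℚ)) ≤ (j:ℚ) := by exact_mod_cast hc1
          have hj3q : (j:ℚ) ≤ (m:ℚ) - 3 := by exact_mod_cast hj3
          have hfac : (0:ℚ) < -L'*((m:ℚ)-1+(j:ℚ)) - cP := by
            nlinarith [mul_nonneg (neg_nonneg.2 hLneg.le) (sub_nonneg.2 hjq)]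
          nlinarith [mul_pos (show (0:ℚ) < (m:ℚ)-1-(j:ℚ) by linarith) hfac]
        · by_cases hc2 : j ≤ -j₁
          · rw [hψM j hc2 h3]
            have hb2 : (0:ℚ) < -(cP+cM)*(m:ℚ) + ((cP+cM) + (eM-eP)) := by
              have := hR₂ m (by omega); push_cast at this ⊢; linarith
            have hb3 : (0:ℚ) < -L'*(m:ℚ) + (L' + cM) := by
              have := hR₃ m (by omega); push_cast at this ⊢; linarith
            have hjq : (j:ℚ) ≤ -(j₁:ℚ) := by exact_mod_cast hc2
            have hj1q : (1:ℚ) ≤ (j₁:ℚ) := by exact_mod_cast hj₁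
            have h1q : 1 - (m:ℚ) ≤ (j:ℚ) := by exact_mod_cast h1
            -- Diff = (x-k)(-L'(x+k)+cM) + (-(cP+cM)x + eM - eP), x = m-1, k = -j
            have hk0 : (0:ℚ) ≤ -(j:ℚ) := by linarith
            have hxk : (0:ℚ) ≤ ((m:ℚ)-1) - (-(j:ℚ)) := by linarith
            have hbr : (0:ℚ) ≤ -L'*(((m:ℚ)-1) + (-(j:ℚ))) + cM := by
              nlinarith [mul_nonneg (neg_nonneg.2 hLneg.le) hk0]
            nlinarith [mul_nonneg hxk hbr]
          · have hms := hMsmall j (by omega) (by omega)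
            have hps : -Msmall < -L'*((m:ℚ)-1)^2 + (-cP)*((m:ℚ)-1) + (-eP) := by
              have := hR₄ (m-1) (by omega)
              push_cast at this ⊢; linarith
            linarith
      exact_mod_cast goalQ
    set Pn := (Finset.Icc (1 - m) (m-1)).filter (fun j => j % 2 = r) with hPndef
    have hmem : (m - 1) ∈ Pn := by
      rw [hPndef, Finset.mem_filter, Finset.mem_Icc]
      exact ⟨⟨by omega, le_refl _⟩, hpar⟩
    have hcfS : cf (∑ j ∈ Pn, t j) (ψ (m-1)) = cf (t (m-1)) (ψ (m-1)) := by
      rw [cf_sum]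
      exact Finset.sum_eq_single_of_mem _ hmem (fun j hj hne => hcflt j _ (hkey j hj hne))
    have hlow : ∀ dd, dd < ψ (m-1) → cf (∑ j ∈ Pn, t j) dd = 0 := by
      intro dd hdd
      rw [cf_sum]
      refine Finset.sum_eq_zero (fun j hj => hcflt j dd ?_)
      by_cases hje : j = m - 1
      · rw [hje]; exact hdd
      · exact lt_trans hdd (hkey j hj hje)
    have hcfS' : cf (∑ j ∈ Pn, t j) (ψ (m-1)) ≠ 0 := by rw [hcfS]; exact hcfD (m-1)
    have hdegS : degM (∑ j ∈ Pn, t j) = ψ (m-1) := degM_eq_of hcfS' hlow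
    obtain ⟨hh1, hh2⟩ := hfinal n (ψ (m-1)) hpar hdegS (ne_zero_of_cf hcfS')
    refine ⟨hh1, ?_⟩
    rw [hh2, hψP (m-1) (by omega) (by omega)]
    simp only [hL'def, hcPdef, hePdef]
    push_cast
    rw [hmc]
    ring
  · -- L' > 0 case
    have hLpos : (0:ℚ) < L' := by rw [hLq]; exact mul_pos hq0 hpos
    have hq2 : (2:ℚ) ≤ (q:ℚ) := by exact_mod_cast hq
    have hRex : ∀ D : ℤ, ∃ R : ℤ, j₁ + 1 ≤ R ∧
        ∀ j : ℤ, j % 2 = r → (R ≤ j ∨ j ≤ -R) → D < ψ j := by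
      intro D
      obtain ⟨RP, hRP1, hRP⟩ := quad_big L' cP eP (D:ℚ) hLpos
      obtain ⟨RM, hRM1, hRM⟩ := quad_big L' (-cM) eM (D:ℚ) hLpos
      refine ⟨RP ⊔ RM ⊔ (j₁+1), le_sup_right, fun j hjp hj => ?_⟩
      simp only [sup_le_iff] at *
      have goalQ : (D:ℚ) < (ψ j : ℚ) := by
        rcases hj with hj | hj
        · rw [hψP j (by omega) hjp]
          exact hRP j (by omega)
        · rw [hψM j (by omega) hjp]
          have := hRM (-j) (by omega)
          push_cast at this
          nlinarith [this]
      exact_mod_cast goalQ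
    choose Rf hRf1 hRf2 using hRex
    obtain ⟨MP, hMP⟩ := quad_lb L' cP eP hLpos
    obtain ⟨MM, hMM⟩ := quad_lb L' (-cM) eM hLpos
    have hMZex : ∃ MZ : ℤ, ∀ j : ℤ, j % 2 = r → MZ ≤ ψ j := by
      refine ⟨⌊min (min MP MM) Msmall⌋, fun j hjp => ?_⟩
      have hfl : ((⌊min (min MP MM) Msmall⌋ : ℤ) : ℚ) ≤ min (min MP MM) Msmall :=
        Int.floor_le _
      have goalQ : ((⌊min (min MP MM) Msmall⌋ : ℤ) : ℚ) ≤ (ψ j : ℚ) := by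
        rcases le_or_gt j₁ j with hc1 | hc1
        · rw [hψP j hc1 hjp]
          have := hMP j
          have h2 : min (min MP MM) Msmall ≤ MP := le_trans (min_le_left _ _) (min_le_left _ _)
          linarith
        · rcases le_or_gt j (-j₁) with hc2 | hc2
          · rw [hψM j hc2 hjp]
            have := hMM (-j)
            push_cast at this
            have h2 : min (min MP MM) Msmall ≤ MM := le_trans (min_le_left _ _) (min_le_right _ _)
            nlinarith [this]
          · have := hMsmall j (by omega) (by omega)
            have h2 : min (min MP MM) Msmall ≤ Msmall := min_le_right _ _
            linarith
      exact_mod_cast goalQ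
    obtain ⟨MZ, hMZ⟩ := hMZex
    set c : ℤ → ℤ := fun D =>
      ∑ j ∈ (Finset.Icc (-(Rf D)) (Rf D)).filter (fun j => j % 2 = r), cf (t j) D with hcdef
    have hsum_eq : ∀ (D K : ℤ), Rf D ≤ K →
        ∑ j ∈ (Finset.Icc (-K) K).filter (fun j => j % 2 = r), cf (t j) D = c D := by
      intro D K hK
      rw [hcdef]
      refine (Finset.sum_subset
        (Finset.filter_subset_filter _ (Finset.Icc_subset_Icc (by omega) hK)) ?_).symm
      intro j hjW hjb
      rw [Finset.mem_filter, Finset.mem_Icc] at hjW hjb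
      exact hcflt j D (hRf2 D j hjW.2 (by omega))
    by_cases hc0 : ∀ D : ℤ, c D = 0
    · -- subcase: all stabilized coefficients vanish
      have hcPM : cP + cM = 16*(a*(q:ℚ)) - 4*(p:ℚ) := by rw [hcPdef, hcMdef]; ring
      obtain ⟨R₅, hR₅⟩ := lin_big (cP+cM) ((cP+cM) + (eP-eM)) 0 (by rw [hcPM]; nlinarith)
      obtain ⟨R₆, hR₆⟩ := lin_big (2*L') (4*L' + cP) 0 (by linarith)
      obtain ⟨R₇, hR₇⟩ := lin_big (2*L') (4*L' - cM) 0 (by linarith)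
      refine ⟨(q:ℚ)^2*a, ((q:ℚ)-1)*(4*a*(q:ℚ)-(p:ℚ))/2 + b*(q:ℚ),
        ((p:ℚ)-(p:ℚ)*(q:ℚ))/2 + a*((q:ℚ)-1)^2 + b*((q:ℚ)-1) + d,
        R₅ ⊔ R₆ ⊔ R₇ ⊔ (j₁+2), Or.inl rfl, by nlinarith, ?_⟩
      intro n hn hpar
      simp only [sup_le_iff] at hn
      obtain ⟨⟨⟨hn1, hn2⟩, hn3⟩, hn4⟩ := hn
      set m : ℤ := (n : ℤ) with hmdef
      have hmc : ((m:ℚ)) = (n:ℚ) := by norm_cast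
      have hparm : (-(m+1)) % 2 = r := by omega
      set Dn : ℤ := ψ (-(m+1)) with hDndef
      have hDnQ : (Dn : ℚ) = L'*((m:ℚ)+1)^2 - cM*((m:ℚ)+1) + eM := by
        rw [hDndef, hψM (-(m+1)) (by omega) hparm]
        push_cast; ring
      have hout : ∀ j : ℤ, j % 2 = r → (m+1 ≤ j ∨ j ≤ -(m+1)) → j ≠ -(m+1) → Dn < ψ j := by
        intro j hjp hj hne
        have hδ : (0:ℚ) < (cP+cM)*(m:ℚ) + ((cP+cM) + (eP-eM)) := by
          have := hR₅ m (by omega); push_cast at this ⊢; linarith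
        have goalQ : (Dn : ℚ) < (ψ j : ℚ) := by
          rw [hDnQ]
          rcases hj with hj | hj
          · rw [hψP j (by omega) hjp]
            have hjq : ((m:ℚ)+1) ≤ (j:ℚ) := by exact_mod_cast hj
            by_cases hje : j = m+1
            · subst hje; push_cast; linarith
            · have hj3 : m + 3 ≤ j := by omega
              have hj3q : ((m:ℚ)+3) ≤ (j:ℚ) := by exact_mod_cast hj3
              have hε : (0:ℚ) < 2*L'*(m:ℚ) + (4*L' + cP) := by
                have := hR₆ m (by omega); push_cast at this ⊢; linarith
              have hfac : (0:ℚ) ≤ L'*((j:ℚ)+(m:ℚ)+1) + cP := by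
                nlinarith [mul_nonneg hLpos.le (show (0:ℚ) ≤ (j:ℚ) - ((m:ℚ)+3) by linarith)]
              nlinarith [mul_nonneg (show (0:ℚ) ≤ (j:ℚ) - ((m:ℚ)+1) by linarith) hfac]
          · have hj3 : j ≤ -(m+3) := by omega
            rw [hψM j (by omega) hjp]
            have hj3q : (j:ℚ) ≤ -((m:ℚ)+3) := by exact_mod_cast hj3
            have hη : (0:ℚ) < 2*L'*(m:ℚ) + (4*L' - cM) := by
              have := hR₇ m (by omega); push_cast at this ⊢; linarith
            have hfac : (0:ℚ) < -(L'*((j:ℚ)-((m:ℚ)+1)) + cM) := by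
              nlinarith [mul_nonneg hLpos.le (show (0:ℚ) ≤ -((m:ℚ)+3) - (j:ℚ) by linarith)]
            nlinarith [mul_pos (show (0:ℚ) < -((j:ℚ)+(m:ℚ)+1) by linarith) hfac]
        exact_mod_cast goalQ
      set Pn := (Finset.Icc (1 - m) (m-1)).filter (fun j => j % 2 = r) with hPndef
      have hsplitW : ∀ dd : ℤ, dd ≤ Dn →
          cf (∑ j ∈ Pn, t j) dd = - ∑ j ∈
            ((Finset.Icc (-(max (Rf dd) (m+1))) (max (Rf dd) (m+1))).filter
              (fun j => j % 2 = r)) \ Pn, cf (t j) dd := by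
        intro dd hdd
        set K : ℤ := max (Rf dd) (m+1) with hKdef
        set W := (Finset.Icc (-K) K).filter (fun j => j % 2 = r) with hWdef
        have hPnW : Pn ⊆ W := by
          rw [hPndef, hWdef]
          exact Finset.filter_subset_filter _ (Finset.Icc_subset_Icc (by omega) (by omega))
        have h1 : ∑ j ∈ W, cf (t j) dd = c dd := hsum_eq dd K (le_max_left _ _)
        have h2 : ∑ j ∈ W \ Pn, cf (t j) dd + ∑ j ∈ Pn, cf (t j) dd
            = ∑ j ∈ W, cf (t j) dd := Finset.sum_sdiff hPnW
        rw [cf_sum]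
        rw [h1, hc0 dd] at h2
        linarith [h2]
      have hlow : ∀ dd : ℤ, dd < Dn → cf (∑ j ∈ Pn, t j) dd = 0 := by
        intro dd hdd
        rw [hsplitW dd hdd.le, neg_eq_zero]
        refine Finset.sum_eq_zero (fun j hj => ?_)
        rw [Finset.mem_sdiff, Finset.mem_filter, Finset.mem_Icc] at hj
        have hj2 : j % 2 = r := hj.1.2
        have hnotin : ¬(1 - m ≤ j ∧ j ≤ m - 1) := by
          intro hcon
          exact hj.2 (by rw [hPndef, Finset.mem_filter, Finset.mem_Icc]; exact ⟨hcon, hj2⟩)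
        have hrange : m+1 ≤ j ∨ j ≤ -(m+1) := by omega
        by_cases hje : j = -(m+1)
        · exact hcflt j dd (by rw [hje, ← hDndef]; exact hdd)
        · exact hcflt j dd (lt_trans hdd (hout j hj2 hrange hje))
      have hcfDn : cf (∑ j ∈ Pn, t j) Dn = - cf (t (-(m+1))) Dn := by
        rw [hsplitW Dn le_rfl]
        congr 1
        refine Finset.sum_eq_single_of_mem _ ?_ (fun j hj hne => ?_)
        · rw [Finset.mem_sdiff, Finset.mem_filter, Finset.mem_Icc]
          refine ⟨⟨⟨by omega, by omega⟩, hparm⟩, ?_⟩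
          rw [hPndef, Finset.mem_filter, Finset.mem_Icc]
          push_neg
          intro hcon
          omega
        · rw [Finset.mem_sdiff, Finset.mem_filter, Finset.mem_Icc] at hj
          have hj2 : j % 2 = r := hj.1.2
          have hnotin : ¬(1 - m ≤ j ∧ j ≤ m - 1) := by
            intro hcon
            exact hj.2 (by rw [hPndef, Finset.mem_filter, Finset.mem_Icc]; exact ⟨hcon, hj2⟩)
          have hrange : m+1 ≤ j ∨ j ≤ -(m+1) := by omega
          exact hcflt j Dn (hout j hj2 hrange hne)
      have hcfS' : cf (∑ j ∈ Pn, t j) Dn ≠ 0 := by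
        rw [hcfDn, neg_ne_zero]; exact hcfD (-(m+1))
      have hdegS : degM (∑ j ∈ Pn, t j) = Dn := degM_eq_of hcfS' hlow
      obtain ⟨hh1, hh2⟩ := hfinal n Dn hpar hdegS (ne_zero_of_cf hcfS')
      refine ⟨hh1, ?_⟩
      rw [hh2, hDnQ]
      simp only [hL'def, hcMdef, heMdef]
      rw [hmc]
      ring
    · -- subcase: some stabilized coefficient is nonzero
      push_neg at hc0
      have hbdd : ∀ D : ℤ, c D ≠ 0 → MZ ≤ D := by
        intro D hD
        obtain ⟨j, hjmem, hjne⟩ := Finset.exists_ne_zero_of_sum_ne_zero hD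
        rw [Finset.mem_filter] at hjmem
        have h1 : degM (t j) ≤ D := degM_le_of_cf_ne hjne
        rw [hdegt j] at h1
        exact le_trans (hMZ j hjmem.2) h1
      have : DecidablePred (fun z : ℤ => c z ≠ 0) := Classical.decPred _
      obtain ⟨Ds, hDs, hleast⟩ := Int.exists_least_of_bdd
        ⟨MZ, fun z hz => hbdd z hz⟩ hc0
      have hcz : ∀ dd : ℤ, dd < Ds → c dd = 0 := by
        intro dd hdd
        by_contra hcc
        exact absurd (hleast dd hcc) (by omega)
      set RmaxN : ℕ := (Finset.Icc MZ Ds).sup (fun dd => (Rf dd).toNat) with hRmdef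
      have hRm : ∀ dd : ℤ, MZ ≤ dd → dd ≤ Ds → Rf dd ≤ (RmaxN : ℤ) := by
        intro dd h1 h2
        have h3 : (Rf dd).toNat ≤ RmaxN :=
          Finset.le_sup (f := fun dd => (Rf dd).toNat) (Finset.mem_Icc.2 ⟨h1, h2⟩)
        have h4 : 0 ≤ Rf dd := by have := hRf1 dd; omega
        omega
      refine ⟨(p:ℚ)*(q:ℚ)/4, 0, ((Ds:ℚ) - (p:ℚ)*(q:ℚ))/4,
        (RmaxN : ℤ) + 2, Or.inr rfl, le_refl 0, ?_⟩
      intro n hn hpar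
      set m : ℤ := (n : ℤ) with hmdef
      have hnm : (RmaxN:ℤ) + 2 ≤ m := hn
      have hmc : ((m:ℚ)) = (n:ℚ) := by norm_cast
      set Pn := (Finset.Icc (1 - m) (m-1)).filter (fun j => j % 2 = r) with hPndef
      have hstab : ∀ dd : ℤ, dd ≤ Ds → cf (∑ j ∈ Pn, t j) dd = c dd := by
        intro dd hdd
        rw [cf_sum]
        by_cases hML : MZ ≤ dd
        · have hRle : Rf dd ≤ m - 1 := by have := hRm dd hML hdd; omega
          rw [hcdef]
          refine (Finset.sum_subset
            (Finset.filter_subset_filter _ (Finset.Icc_subset_Icc (by omega) hRle)) ?_).symm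
          intro j hjW hjb
          rw [Finset.mem_filter, Finset.mem_Icc] at hjW hjb
          exact hcflt j dd (hRf2 dd j hjW.2 (by omega))
        · have hz1 : c dd = 0 := by
            rw [hcdef]
            refine Finset.sum_eq_zero (fun j hj => ?_)
            rw [Finset.mem_filter] at hj
            exact hcflt j dd (by have := hMZ j hj.2; omega)
          rw [hz1]
          refine Finset.sum_eq_zero (fun j hj => ?_)
          rw [Finset.mem_filter] at hj
          exact hcflt j dd (by have := hMZ j hj.2; omega)
      have hcfS' : cf (∑ j ∈ Pn, t j) Ds ≠ 0 := by rw [hstab Ds le_rfl]; exact hDs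
      have hlow : ∀ dd : ℤ, dd < Ds → cf (∑ j ∈ Pn, t j) dd = 0 := by
        intro dd hdd
        rw [hstab dd hdd.le]
        exact hcz dd hdd
      have hdegS : degM (∑ j ∈ Pn, t j) = Ds := degM_eq_of hcfS' hlow
      obtain ⟨hh1, hh2⟩ := hfinal n Ds hpar hdegS (ne_zero_of_cf hcfS')
      refine ⟨hh1, ?_⟩
      rw [hh2]
      ring

set_option maxHeartbeats 1000000 in
/-- The lowest-degree half of Theorem 3.6 of Kalfagianni–Tran, expressed for the
cabling sum. -/
theorem statement1 (p q : ℤ) (hq : 2 ≤ q) (hcop : Int.gcd p q = 1)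
    (J : ℤ → LaurentPolynomial ℤ)
    (hJodd : ∀ m : ℤ, J (-m) = -J m)
    (hJne : ∀ m : ℤ, 1 ≤ m → J m ≠ 0)
    (a₀ a₁ b₀ b₁ d₀ d₁ : ℚ) (hb₀ : 0 ≤ b₀) (hb₁ : 0 ≤ b₁) (N : ℤ)
    (hdeg : ∀ n : ℤ, N ≤ n →
      (degM (J n) : ℚ) =
        4 * ((if Even n then a₀ else a₁) * (n : ℚ) ^ 2 +
             (if Even n then b₀ else b₁) * (n : ℚ) +
             (if Even n then d₀ else d₁)))
    (hslope₀ : (p : ℚ) / (q : ℚ) ≠ 4 * a₀)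
    (hslope₁ : (p : ℚ) / (q : ℚ) ≠ 4 * a₁) :
    ∃ A₀ A₁ B₀ B₁ D₀ D₁ : ℚ,
      ({A₀, A₁} : Set ℚ) ⊆
        ({(q : ℚ) ^ 2 * a₀, (q : ℚ) ^ 2 * a₁, (p : ℚ) * (q : ℚ) / 4} : Set ℚ) ∧
      0 ≤ B₀ ∧ 0 ≤ B₁ ∧
      ∃ N' : ℤ, ∀ n : ℕ, N' ≤ (n : ℤ) →
        cablingSum J p q n ≠ 0 ∧
        (degM (cablingSum J p q n) : ℚ) =
          4 * ((if Even n then A₀ else A₁) * (n : ℚ) ^ 2 +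
               (if Even n then B₀ else B₁) * (n : ℚ) +
               (if Even n then D₀ else D₁)) := by
  have hq0 : (0:ℚ) < (q:ℚ) := by exact_mod_cast (by omega : (0:ℤ) < q)
  have hJne' : ∀ j : ℤ, J (q*j+1) ≠ 0 := by
    intro j
    rcases le_or_gt 1 (q*j+1) with h | h
    · exact hJne _ h
    · have hjneg : j ≤ -1 := by
        by_contra hcon
        push_neg at hcon
        nlinarith [mul_nonneg (by omega : (0:ℤ) ≤ q) (by omega : (0:ℤ) ≤ j)]
      have h2 : q*j+1 ≤ -1 := by
        nlinarith [mul_nonneg (by omega : (0:ℤ) ≤ q - 2) (by omega : (0:ℤ) ≤ -j)]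
      have h3 : J (q*j+1) = - J (-(q*j+1)) := by
        have := hJodd (-(q*j+1))
        rw [neg_neg] at this
        rw [this]
      rw [h3]
      exact neg_ne_zero.2 (hJne _ (by omega))
  set j₁ : ℤ := max N 1 with hj₁def
  have main : ∀ (r : ℤ) (aε bε dε : ℚ), 0 ≤ bε → ((p:ℚ)/(q:ℚ) ≠ 4*aε) →
      (∀ j : ℤ, j % 2 = r →
        ((if Even (q*j+1) then a₀ else a₁) = aε ∧
         (if Even (q*j+1) then b₀ else b₁) = bε ∧
         (if Even (q*j+1) then d₀ else d₁) = dε)) →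
      ∃ A B D : ℚ, ∃ N' : ℤ,
        (A = (q:ℚ)^2 * aε ∨ A = (p:ℚ)*(q:ℚ)/4) ∧ 0 ≤ B ∧
        ∀ n : ℕ, N' ≤ (n:ℤ) → ((n:ℤ) - 1) % 2 = r →
          cablingSum J p q n ≠ 0 ∧
          (degM (cablingSum J p q n) : ℚ) = 4*(A*(n:ℚ)^2 + B*(n:ℚ) + D) := by
    intro r aε bε dε hbε hslope hmatch
    have hL : (4*aε*(q:ℚ) - (p:ℚ)) ≠ 0 := by
      intro h0
      apply hslope
      rw [div_eq_iff (ne_of_gt hq0)]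
      linarith
    have hdegP : ∀ j : ℤ, j₁ ≤ j → j % 2 = r →
        (degM (J (q*j+1)) : ℚ) = 4*(aε*((q:ℚ)*j+1)^2 + bε*((q:ℚ)*j+1) + dε) := by
      intro j hj hjr
      have hjpos : 1 ≤ j := by omega
      have hjN : N ≤ j := le_trans (le_max_left N 1) hj
      have hm : N ≤ q*j+1 := by
        nlinarith [mul_nonneg (by omega : (0:ℤ) ≤ q - 2) (by omega : (0:ℤ) ≤ j - 1)]
      have := hdeg (q*j+1) hm
      obtain ⟨e1, e2, e3⟩ := hmatch j hjr
      rw [e1, e2, e3] at this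
      rw [this]
      push_cast
      ring
    have hdegN : ∀ j : ℤ, j ≤ -j₁ → j % 2 = r →
        (degM (J (q*j+1)) : ℚ) = 4*(aε*((q:ℚ)*j+1)^2 - bε*((q:ℚ)*j+1) + dε) := by
      intro j hj hjr
      have hjneg : j ≤ -1 := by omega
      have hj₁N : N ≤ j₁ := le_max_left N 1
      have hj₁1 : (1:ℤ) ≤ j₁ := le_max_right N 1
      have hm : N ≤ -(q*j+1) := by
        nlinarith [mul_nonneg (by omega : (0:ℤ) ≤ q - 2) (by omega : (0:ℤ) ≤ -j - 1)]
      have hJm : J (q*j+1) = - J (-(q*j+1)) := by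
        have := hJodd (-(q*j+1))
        rw [neg_neg] at this
        rw [this]
      have hdm : degM (J (q*j+1)) = degM (J (-(q*j+1))) := by
        rw [hJm, degM_neg]
      have := hdeg (-(q*j+1)) hm
      have heven : Even (-(q*j+1)) ↔ Even (q*j+1) := even_neg
      rw [if_congr heven rfl rfl, if_congr heven rfl rfl, if_congr heven rfl rfl] at this
      obtain ⟨e1, e2, e3⟩ := hmatch j hjr
      rw [e1, e2, e3] at this
      rw [hdm, this]
      push_cast
      ring
    exact classLemma p q hq J hJne' aε bε dε hbε r j₁ (by omega) hdegP hdegN hL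
  -- instantiate for the two parity classes
  have heven_char : ∀ j : ℤ, (Even (q*j+1) ↔ (¬ Even q ∧ ¬ Even j)) := by
    intro j
    rw [Int.even_add_one, Int.even_mul]
    tauto
  have hmatch0 : ∀ j : ℤ, j % 2 = 0 → ¬ Even (q*j+1) := by
    intro j hj
    rw [heven_char j]
    have : Even j := Int.even_iff.2 hj
    tauto
  have hr0 := main 0 a₁ b₁ d₁ hb₁ hslope₁
    (fun j hj => by rw [if_neg (hmatch0 j hj), if_neg (hmatch0 j hj), if_neg (hmatch0 j hj)]
                    exact ⟨rfl, rfl, rfl⟩)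
  obtain ⟨Ao, Bo, Do, No, hAo, hBo, ho⟩ := hr0
  rcases Int.even_or_odd q with hqe | hqo
  · -- q even
    have hmatch1 : ∀ j : ℤ, j % 2 = 1 → ¬ Even (q*j+1) := by
      intro j hj
      rw [heven_char j]
      tauto
    obtain ⟨Ae, Be, De, Ne, hAe, hBe, he⟩ := main 1 a₁ b₁ d₁ hb₁ hslope₁
      (fun j hj => by rw [if_neg (hmatch1 j hj), if_neg (hmatch1 j hj), if_neg (hmatch1 j hj)]
                      exact ⟨rfl, rfl, rfl⟩)
    refine ⟨Ae, Ao, Be, Bo, De, Do, ?_, hBe, hBo, max Ne No, ?_⟩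
    · intro x hx
      simp only [Set.mem_insert_iff, Set.mem_singleton_iff] at hx ⊢
      rcases hx with h | h <;> subst h <;> tauto
    · intro n hn
      by_cases hev : Even n
      · have hnn : n % 2 = 0 := Nat.even_iff.1 hev
        have hp : ((n:ℤ) - 1) % 2 = 1 := by omega
        obtain ⟨h1, h2⟩ := he n (le_trans (le_max_left _ _) hn) hp
        exact ⟨h1, by rw [h2]; simp [hev]⟩
      · have hnn : n % 2 = 1 := Nat.odd_iff.1 (Nat.not_even_iff_odd.1 hev)
        have hp : ((n:ℤ) - 1) % 2 = 0 := by omega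
        obtain ⟨h1, h2⟩ := ho n (le_trans (le_max_right _ _) hn) hp
        exact ⟨h1, by rw [h2]; simp [hev]⟩
  · -- q odd
    have hmatch1 : ∀ j : ℤ, j % 2 = 1 → Even (q*j+1) := by
      intro j hj
      rw [heven_char j]
      have h1 : ¬ Even q := Int.not_even_iff_odd.2 hqo
      have h2 : ¬ Even j := by rw [Int.even_iff]; omega
      exact ⟨h1, h2⟩
    obtain ⟨Ae, Be, De, Ne, hAe, hBe, he⟩ := main 1 a₀ b₀ d₀ hb₀ hslope₀
      (fun j hj => by rw [if_pos (hmatch1 j hj), if_pos (hmatch1 j hj), if_pos (hmatch1 j hj)]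
                      exact ⟨rfl, rfl, rfl⟩)
    refine ⟨Ae, Ao, Be, Bo, De, Do, ?_, hBe, hBo, max Ne No, ?_⟩
    · intro x hx
      simp only [Set.mem_insert_iff, Set.mem_singleton_iff] at hx ⊢
      rcases hx with h | h <;> subst h <;> tauto
    · intro n hn
      by_cases hev : Even n
      · have hnn : n % 2 = 0 := Nat.even_iff.1 hev
        have hp : ((n:ℤ) - 1) % 2 = 1 := by omega
        obtain ⟨h1, h2⟩ := he n (le_trans (le_max_left _ _) hn) hp
        exact ⟨h1, by rw [h2]; simp [hev]⟩
      · have hnn : n % 2 = 1 := Nat.odd_iff.1 (Nat.not_even_iff_odd.1 hev)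
        have hp : ((n:ℤ) - 1) % 2 = 0 := by omega
        obtain ⟨h1, h2⟩ := ho n (le_trans (le_max_right _ _) hn) hp
        exact ⟨h1, by rw [h2]; simp [hev]⟩
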